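/- Let a_n = Σ_{k=0}^n C(n,k)^2·C(n+k,k)^2 be the Apéry numbers and α an integer. Define v_n(α) = Σ_{k=0}^n C(n,k)·(-α)^{n-k}·a_k and let M = gcd(v_1(α), v_2(α), v_3(α), v_4(α)) (a non-negative integer). Then for all integers n ≥ 0, a_n ≡ α^n modulo the largest square-free divisor of M (interpreted as 1 if M = 0), i.e. modulo the radical of M. -/

import Mathlib

/-- The Apéry numbers `aₙ = ∑ₖ C(n,k)² C(n+k,k)²`. -/
def apery (n : ℕ) : ℤ :=
  ∑ k ∈ Finset.range (n + 1), (n.choose k : ℤ) ^ 2 * ((n + k).choose k : ℤ) ^ 2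

/-- The binomial transform of an integer sequence `u` at `α`. -/
def binomialTransform (u : ℕ → ℤ) (α : ℤ) (n : ℕ) : ℤ :=
  ∑ k ∈ Finset.range (n + 1), (n.choose k : ℤ) * (-α) ^ (n - k) * u k

/-- The radical (largest square-free divisor) of a natural number:
the product of its distinct prime factors; the radical of `0` is `1`. -/
def natRadical (M : ℕ) : ℕ := ∏ p ∈ M.primeFactors, p

open Finset

/-- The "digit coefficient" appearing when splitting the Apéry sum along base-`p` digits. -/
def lucasCoef (p r s : ℕ) : ZMod p :=
  if r + s < p then ((r.choose s * ((r + s).choose s) : ℕ) : ZMod p) ^ 2 else 0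

lemma sum_range_mul_eq {M : Type*} [AddCommMonoid M] (f : ℕ → M) (p m : ℕ) :
    ∑ k ∈ range (p * m), f k = ∑ j ∈ range m, ∑ s ∈ range p, f (p * j + s) := by
  induction m with
  | zero => simp
  | succ m ih =>
      rw [Nat.mul_succ, Finset.sum_range_add, ih, Finset.sum_range_succ]

lemma choose_zmod (p : ℕ) [Fact p.Prime] (n k : ℕ) :
    ((n.choose k : ℕ) : ZMod p)
      = ((n % p).choose (k % p) : ℕ) * (((n / p).choose (k / p) : ℕ) : ZMod p) := by
  have := Choose.choose_modEq_choose_mod_mul_choose_div (n := n) (k := k) (p := p)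
  have h := (ZMod.intCast_eq_intCast_iff _ _ _).mpr this
  push_cast at h ⊢
  exact h

lemma apery_step (p : ℕ) [Fact p.Prime] (m r : ℕ) (hr : r < p) :
    ((apery (p * m + r) : ℤ) : ZMod p)
      = (∑ s ∈ range p, lucasCoef p r s) * ((apery m : ℤ) : ZMod p) := by
  have hp : 0 < p := (Fact.out : p.Prime).pos
  have hcast : ∀ N : ℕ, ((apery N : ℤ) : ZMod p)
      = ∑ k ∈ range (N + 1), ((N.choose k : ℕ) : ZMod p) ^ 2 * (((N + k).choose k : ℕ) : ZMod p) ^ 2 := by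
    intro N; rw [apery]; push_cast; rfl
  rw [hcast, hcast]
  set n := p * m + r with hn
  have hext : ∑ k ∈ range (n + 1), ((n.choose k : ℕ) : ZMod p) ^ 2 * (((n + k).choose k : ℕ) : ZMod p) ^ 2
      = ∑ k ∈ range (p * (m + 1)), ((n.choose k : ℕ) : ZMod p) ^ 2 * (((n + k).choose k : ℕ) : ZMod p) ^ 2 := by
    apply Finset.sum_subset
    · apply Finset.range_subset_range.mpr; rw [Nat.mul_succ]; omega
    · intro x _ hx
      have : n < x := by simp only [Finset.mem_range] at hx; omega
      rw [Nat.choose_eq_zero_of_lt this]; push_cast; ring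
  rw [hext, sum_range_mul_eq]
  have key : ∀ j, ∀ s < p,
      ((n.choose (p * j + s) : ℕ) : ZMod p) ^ 2 * (((n + (p * j + s)).choose (p * j + s) : ℕ) : ZMod p) ^ 2
      = lucasCoef p r s * (((m.choose j : ℕ) : ZMod p) ^ 2 * (((m + j).choose j : ℕ) : ZMod p) ^ 2) := by
    intro j s hs
    have hk1 : (p * j + s) % p = s := by rw [Nat.mul_add_mod]; exact Nat.mod_eq_of_lt hs
    have hk2 : (p * j + s) / p = j := by rw [Nat.mul_add_div hp, Nat.div_eq_of_lt hs, Nat.add_zero]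
    have hn1 : n % p = r := by rw [hn, Nat.mul_add_mod]; exact Nat.mod_eq_of_lt hr
    have hn2 : n / p = m := by rw [hn, Nat.mul_add_div hp, Nat.div_eq_of_lt hr, Nat.add_zero]
    have L1 : ((n.choose (p * j + s) : ℕ) : ZMod p)
        = ((r.choose s : ℕ) : ZMod p) * ((m.choose j : ℕ) : ZMod p) := by
      rw [choose_zmod, hn1, hn2, hk1, hk2]
    by_cases hrs : r + s < p
    · have ha : n + (p * j + s) = p * (m + j) + (r + s) := by rw [hn]; ring
      have hm1 : (n + (p * j + s)) % p = r + s := by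
        rw [ha, Nat.mul_add_mod]; exact Nat.mod_eq_of_lt hrs
      have hm2 : (n + (p * j + s)) / p = m + j := by
        rw [ha, Nat.mul_add_div hp, Nat.div_eq_of_lt hrs, Nat.add_zero]
      have L2 : (((n + (p * j + s)).choose (p * j + s) : ℕ) : ZMod p)
          = (((r + s).choose s : ℕ) : ZMod p) * (((m + j).choose j : ℕ) : ZMod p) := by
        rw [choose_zmod, hm1, hm2, hk1, hk2]
      rw [L1, L2, lucasCoef, if_pos hrs]
      push_cast
      ring
    · have ha : n + (p * j + s) = p * (m + j + 1) + (r + s - p) := by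
        rw [hn, Nat.mul_add, Nat.mul_add, Nat.mul_one]; omega
      have hlt : r + s - p < p := by omega
      have hm1 : (n + (p * j + s)) % p = r + s - p := by
        rw [ha, Nat.mul_add_mod]; exact Nat.mod_eq_of_lt hlt
      have L2 : (((n + (p * j + s)).choose (p * j + s) : ℕ) : ZMod p) = 0 := by
        rw [choose_zmod, hm1, hk1, Nat.choose_eq_zero_of_lt (by omega)]
        push_cast; ring
      rw [L2, lucasCoef, if_neg hrs]
      ring
  calc ∑ j ∈ range (m + 1), ∑ s ∈ range p,
        ((n.choose (p * j + s) : ℕ) : ZMod p) ^ 2 * (((n + (p * j + s)).choose (p * j + s) : ℕ) : ZMod p) ^ 2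
      = ∑ j ∈ range (m + 1), ∑ s ∈ range p,
        lucasCoef p r s * (((m.choose j : ℕ) : ZMod p) ^ 2 * (((m + j).choose j : ℕ) : ZMod p) ^ 2) := by
        refine Finset.sum_congr rfl fun j _ => Finset.sum_congr rfl fun s hs => ?_
        exact key j s (Finset.mem_range.mp hs)
    _ = (∑ s ∈ range p, lucasCoef p r s) * ∑ j ∈ range (m + 1),
        (((m.choose j : ℕ) : ZMod p) ^ 2 * (((m + j).choose j : ℕ) : ZMod p) ^ 2) := by
        rw [Finset.sum_comm, Finset.sum_mul]
        exact Finset.sum_congr rfl fun s _ => (Finset.mul_sum _ _ _).symm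

lemma apery_zmod (p : ℕ) [Fact p.Prime]
    (h : ∀ r < p, ∑ s ∈ range p, lucasCoef p r s = (-1) ^ r) :
    ∀ n : ℕ, ((apery n : ℤ) : ZMod p) = (-1) ^ n := by
  have hp2 : 2 ≤ p := (Fact.out : p.Prime).two_le
  have hneg : ((-1 : ZMod p)) ^ p = -1 := ZMod.pow_card (-1)
  intro n
  induction n using Nat.strong_induction_on with
  | _ n ih =>
    rcases Nat.eq_zero_or_pos n with rfl | hn
    · simp [apery]
    · have hdecomp : n = p * (n / p) + n % p := (Nat.div_add_mod n p).symm
      have hrlt : n % p < p := Nat.mod_lt _ (by omega)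
      have hmlt : n / p < n := Nat.div_lt_self hn (by omega)
      calc ((apery n : ℤ) : ZMod p)
          = ((apery (p * (n / p) + n % p) : ℤ) : ZMod p) := by rw [← hdecomp]
        _ = (∑ s ∈ range p, lucasCoef p (n % p) s) * ((apery (n / p) : ℤ) : ZMod p) :=
            apery_step p (n / p) (n % p) hrlt
        _ = (-1) ^ (n % p) * (-1) ^ (n / p) := by rw [h _ hrlt, ih _ hmlt]
        _ = (-1) ^ n := by
            conv_rhs => rw [hdecomp]
            rw [pow_add, pow_mul, hneg]; ring

lemma apery_mod_two (n : ℕ) : apery n ≡ 5 ^ n [ZMOD ((2 : ℕ) : ℤ)] := by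
  rw [← ZMod.intCast_eq_intCast_iff]
  push_cast
  rw [apery_zmod 2 (by decide) n]
  have : (-1 : ZMod 2) = 5 := by decide
  rw [this]

lemma apery_mod_three (n : ℕ) : apery n ≡ 5 ^ n [ZMOD ((3 : ℕ) : ℤ)] := by
  rw [← ZMod.intCast_eq_intCast_iff]
  push_cast
  rw [apery_zmod 3 (by decide) n]
  have : (-1 : ZMod 3) = 5 := by decide
  rw [this]

lemma apery_mod_six (n : ℕ) : apery n ≡ 5 ^ n [ZMOD (6 : ℤ)] := by
  have h := (Int.modEq_and_modEq_iff_modEq_mul (a := apery n) (b := 5 ^ n)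
    (m := ((2:ℕ):ℤ)) (n := ((3:ℕ):ℤ)) (by norm_num)).mp ⟨apery_mod_two n, apery_mod_three n⟩
  norm_num at h
  exact h

lemma apery_vals : apery 0 = 1 ∧ apery 1 = 5 ∧ apery 2 = 73 ∧ apery 3 = 1445 ∧ apery 4 = 33001 := by
  norm_num [apery, Finset.sum_range_succ, Nat.choose]

lemma natRadical_24 : natRadical 24 = 6 := by
  have h : (24:ℕ).primeFactors = {2, 3} := by
    rw [show (24:ℕ) = 2 ^ 3 * 3 by norm_num, Nat.primeFactors_mul (by norm_num) (by norm_num),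
      Nat.primeFactors_pow _ (by norm_num), Nat.Prime.primeFactors (by norm_num),
      Nat.Prime.primeFactors (by norm_num)]
    rfl
  rw [natRadical, h]
  rfl

/-- With `M = gcd(v₁(α), v₂(α), v₃(α), v₄(α))` for the binomial transform `v` of the
Apéry numbers, we have `aₙ ≡ αⁿ` modulo the radical of `M` for all `n ≥ 0`. -/
theorem apery_modEq_radical (α : ℤ) :
    ∀ n : ℕ, apery n ≡ α ^ n
      [ZMOD (natRadical (Int.gcd (binomialTransform apery α 1)
        (Int.gcd (binomialTransform apery α 2)
          (Int.gcd (binomialTransform apery α 3) (binomialTransform apery α 4)))) : ℤ)] := by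
  intro n
  obtain ⟨h0, h1, h2, h3, h4⟩ := apery_vals
  have hv1 : binomialTransform apery α 1 = 5 - α := by
    simp [binomialTransform, Finset.sum_range_succ, h0, h1]; ring
  have hv2 : binomialTransform apery α 2 = α ^ 2 - 10 * α + 73 := by
    simp [binomialTransform, Finset.sum_range_succ, h0, h1, h2]; ring
  have hv3 : binomialTransform apery α 3 = -α ^ 3 + 15 * α ^ 2 - 219 * α + 1445 := by
    simp [binomialTransform, Finset.sum_range_succ, h0, h1, h2, h3]; ring
  set M := Int.gcd (binomialTransform apery α 1)
        (Int.gcd (binomialTransform apery α 2)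
          (Int.gcd (binomialTransform apery α 3) (binomialTransform apery α 4))) with hMdef
  have hd1 : (M : ℤ) ∣ binomialTransform apery α 1 := Int.gcd_dvd_left _ _
  have hdR : (M : ℤ) ∣ (Int.gcd (binomialTransform apery α 2)
          (Int.gcd (binomialTransform apery α 3) (binomialTransform apery α 4)) : ℤ) :=
    Int.gcd_dvd_right _ _
  have hd2 : (M : ℤ) ∣ binomialTransform apery α 2 := hdR.trans (Int.gcd_dvd_left _ _)
  have hd3 : (M : ℤ) ∣ binomialTransform apery α 3 :=
    hdR.trans ((Int.gcd_dvd_right _ _).trans (Int.gcd_dvd_left _ _))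
  have h24 : (M : ℤ) ∣ 24 := by
    have hcomb : (24 : ℤ) = binomialTransform apery α 3 - 12 * binomialTransform apery α 2
        - (α ^ 2 + 2 * α + 109) * binomialTransform apery α 1 := by
      rw [hv1, hv2, hv3]; ring
    rw [hcomb]
    exact dvd_sub (dvd_sub hd3 (hd2.mul_left _)) (hd1.mul_left _)
  have h24n : M ∣ 24 := by exact_mod_cast h24
  have hRM : natRadical M ∣ M := Nat.prod_primeFactors_dvd M
  have hR6 : natRadical M ∣ 6 := by
    have hsub : M.primeFactors ⊆ (24 : ℕ).primeFactors :=
      Nat.primeFactors_mono h24n (by norm_num)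
    calc natRadical M ∣ natRadical 24 :=
          Finset.prod_dvd_prod_of_subset _ _ _ hsub
      _ = 6 := natRadical_24
  have hA : apery n ≡ 5 ^ n [ZMOD (natRadical M : ℤ)] :=
    (apery_mod_six n).of_dvd (by exact_mod_cast hR6)
  have hB : (5 : ℤ) ≡ α [ZMOD (natRadical M : ℤ)] := by
    rw [Int.modEq_iff_dvd]
    have : (natRadical M : ℤ) ∣ 5 - α := by
      calc (natRadical M : ℤ) ∣ (M : ℤ) := by exact_mod_cast hRM
        _ ∣ 5 - α := hv1 ▸ hd1
    have := dvd_neg.mpr this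
    rwa [neg_sub] at this
  exact hA.trans (hB.pow n)
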